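/- For a De Morgan function f: (i) f ∈ ⟨DMA, Δ⟩ iff f preserves B2, K3 and P3; (ii) f ∈ ⟨DMA, Δ, n⟩ iff f preserves K3; (iii) f ∈ ⟨DMA, Δ, b⟩ iff f preserves P3; (iv) f ∈ ⟨DMA, Δ, ∂⟩ iff f preserves B2; (v) f ∈ ⟨DMA, Δ, id_{b↦n}⟩ iff f preserves both B2 and K3; (vi) f ∈ ⟨DMA, Δ, id_{n↦b}⟩ iff f preserves both B2 and P3. -/

import Mathlib

set_option autoImplicit false

/-- The four truth values of the Belnap–Dunn logic. -/
inductive DM4 : Type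
  | t
  | f
  | n
  | b
deriving DecidableEq

namespace DM4

/-- De Morgan negation. -/
def neg : DM4 → DM4
  | t => f
  | f => t
  | n => n
  | b => b

/-- Conflation. -/
def conf : DM4 → DM4
  | t => t
  | f => f
  | n => b
  | b => n

/-- Meet in the truth order. -/
def meet : DM4 → DM4 → DM4
  | f, _ => f
  | _, f => f
  | t, y => y
  | x, t => x
  | n, n => n
  | b, b => b
  | n, b => f
  | b, n => f

/-- Join in the truth order. -/
def join : DM4 → DM4 → DM4
  | t, _ => t
  | _, t => t
  | f, y => y
  | x, f => x
  | n, n => n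
  | b, b => b
  | n, b => t
  | b, n => t

/-- Meet in the information order (⊗). -/
def imeet : DM4 → DM4 → DM4
  | n, _ => n
  | _, n => n
  | b, y => y
  | x, b => x
  | t, t => t
  | f, f => f
  | t, f => n
  | f, t => n

/-- Join in the information order (⊕). -/
def ijoin : DM4 → DM4 → DM4
  | b, _ => b
  | _, b => b
  | n, y => y
  | x, n => x
  | t, t => t
  | f, f => f
  | t, f => b
  | f, t => b

/-- The truth order: least element `f`, greatest element `t`, with `n`, `b` incomparable. -/
def tle (x y : DM4) : Prop := x = y ∨ x = f ∨ y = t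

/-- The information order: least element `n`, greatest element `b`, with `t`, `f` incomparable. -/
def ile (x y : DM4) : Prop := x = y ∨ x = n ∨ y = b

/-- □: maps t to t and everything else to f. -/
def box : DM4 → DM4
  | t => t
  | _ => f

/-- ◇: maps f to f and everything else to t. -/
def diamond : DM4 → DM4
  | f => f
  | _ => t

/-- Δ: maps t, b to t and n, f to f. -/
def delta : DM4 → DM4
  | t => t
  | b => t
  | _ => f

/-- ∇: maps t, n to t and b, f to f. -/
def nabla : DM4 → DM4
  | t => t
  | n => t
  | _ => f

/-- id_{b↦n}: maps b to n and fixes t, f, n. -/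
def idbn : DM4 → DM4
  | b => n
  | x => x

/-- id_{n↦b}: maps n to b and fixes t, f, b. -/
def idnb : DM4 → DM4
  | n => b
  | x => x

/-- id_{n↦t}: maps n to t and fixes t, f, b. -/
def idnt : DM4 → DM4
  | n => t
  | x => x

/-- id_{b↦t}: maps b to t and fixes t, f, n. -/
def idbt : DM4 → DM4
  | b => t
  | x => x

/-- t_{n↦n}: maps n to n and everything else to t. -/
def tnn : DM4 → DM4
  | n => n
  | _ => t

/-- t_{b↦b}: maps b to b and everything else to t. -/
def tbb : DM4 → DM4
  | b => b
  | _ => t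

/-- The binary function pbp²₁. -/
def pbp1 : DM4 → DM4 → DM4
  | t, t => t | t, f => f | t, n => f | t, b => b
  | f, t => t | f, f => f | f, n => f | f, b => b
  | n, t => t | n, f => f | n, n => n | n, b => b
  | b, t => b | b, f => f | b, n => f | b, b => b

/-- The binary function pbp²₂. -/
def pbp2 : DM4 → DM4 → DM4
  | t, t => t | t, f => f | t, n => n | t, b => f
  | f, t => t | f, f => f | f, n => n | f, b => f
  | n, t => n | n, f => f | n, n => n | n, b => f
  | b, t => t | b, f => f | b, n => n | b, b => b

/-- The binary function mnh²₁. -/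
def mnh1 : DM4 → DM4 → DM4
  | t, t => f | t, f => f | t, n => n | t, b => b
  | f, t => f | f, f => f | f, n => n | f, b => b
  | n, t => f | n, f => f | n, n => n | n, b => f
  | b, t => f | b, f => f | b, n => n | b, b => b

/-- The binary function mnh²₂. -/
def mnh2 : DM4 → DM4 → DM4
  | t, t => f | t, f => f | t, n => n | t, b => b
  | f, t => f | f, f => f | f, n => n | f, b => b
  | n, t => f | n, f => f | n, n => n | n, b => b
  | b, t => f | b, f => f | b, n => f | b, b => b

/-- The binary function mhnp². -/
def mhnp2 : DM4 → DM4 → DM4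
  | t, _ => t
  | f, _ => t
  | n, b => f
  | n, _ => n
  | b, n => f
  | b, _ => b

/-- The binary function mnp²₁. -/
def mnp1 : DM4 → DM4 → DM4
  | t, b => b
  | t, _ => t
  | f, b => b
  | f, _ => t
  | n, b => f
  | n, _ => n
  | b, n => f
  | b, _ => b

/-- The binary function mnp²₂. -/
def mnp2 : DM4 → DM4 → DM4
  | t, _ => t
  | f, _ => t
  | n, _ => n
  | b, n => f
  | b, _ => b

/-- The binary function mnp²₃. -/
def mnp3 : DM4 → DM4 → DM4
  | t, n => n
  | t, _ => t
  | f, n => n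
  | f, _ => t
  | n, b => f
  | n, _ => n
  | b, n => f
  | b, _ => b

/-- The binary function mnp²₄. -/
def mnp4 : DM4 → DM4 → DM4
  | t, _ => t
  | f, _ => t
  | n, b => f
  | n, _ => n
  | b, _ => b

/-- The ternary function mhnp³. -/
def mhnp3 : DM4 → DM4 → DM4 → DM4
  | _, t, _ => f
  | _, f, _ => f
  | t, n, _ => n
  | f, n, _ => f
  | b, n, _ => f
  | n, n, b => f
  | n, n, _ => n
  | t, b, _ => b
  | f, b, _ => f
  | n, b, _ => f
  | b, b, n => f
  | b, b, _ => b

/-- The set of designated values. -/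
def Des : Set DM4 := {t, b}

/-- Designatedness as a Boolean predicate. -/
def des : DM4 → Bool
  | t => true
  | b => true
  | _ => false

/-- The protoimplication →_{t-max}. -/
def tmax (x y : DM4) : DM4 :=
  match des x, des y with
  | true, false => n
  | _, _ => t

/-- The protoimplication →_{i-max}. -/
def imax (x y : DM4) : DM4 :=
  match des x, des y with
  | true, false => f
  | _, _ => b

/-- The protoimplication ↔_{t-min}. -/
def tmin (x y : DM4) : DM4 := if x = y then b else f

/-- The protoimplication ↔_{i-min}. -/
def imin (x y : DM4) : DM4 := if x = y then t else n

/-- A binary operation is a protoimplication if it satisfies Reflexivity and Modus Ponens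
with respect to the designated set {t, b}. -/
def IsProtoimplication (r : DM4 → DM4 → DM4) : Prop :=
  (∀ a : DM4, r a a ∈ Des) ∧ ∀ a c : DM4, a ∈ Des → r a c ∈ Des → c ∈ Des

/-- `DMFun k` is the type of De Morgan functions of arity `k + 1` (arities are positive). -/
abbrev DMFun (k : ℕ) : Type := (Fin (k + 1) → DM4) → DM4

/-- Membership in the clone generated by the family of operations `S`
(`S k` is the set of generators of arity `k + 1`). -/
inductive InClone (S : ∀ k : ℕ, Set (DMFun k)) : ∀ k : ℕ, DMFun k → Prop
  | base {k : ℕ} {g : DMFun k} : g ∈ S k → InClone S k g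
  | proj {k : ℕ} (i : Fin (k + 1)) : InClone S k (fun x => x i)
  | comp {k m : ℕ} {g : DMFun m} {h : Fin (m + 1) → DMFun k} :
      InClone S m g → (∀ i, InClone S k (h i)) →
      InClone S k (fun x => g (fun i => h i x))

/-- A family of sets of De Morgan functions is a clone if it contains all projections
and is closed under composition. -/
structure IsClone (C : ∀ k : ℕ, Set (DMFun k)) : Prop where
  proj : ∀ (k : ℕ) (i : Fin (k + 1)), (fun x => x i) ∈ C k
  comp : ∀ (k m : ℕ) (g : DMFun m) (h : Fin (m + 1) → DMFun k),
      g ∈ C m → (∀ i, h i ∈ C k) → (fun x => g (fun i => h i x)) ∈ C k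

/-- The generating family consisting of a single unary operation. -/
def op1 (g : DM4 → DM4) : ∀ k : ℕ, Set (DMFun k)
  | 0 => {fun x => g (x 0)}
  | _ + 1 => ∅

/-- The generating family consisting of a single binary operation. -/
def op2 (g : DM4 → DM4 → DM4) : ∀ k : ℕ, Set (DMFun k)
  | 1 => {fun x => g (x 0) (x 1)}
  | _ => ∅

/-- The generating family consisting of a single ternary operation. -/
def op3 (g : DM4 → DM4 → DM4 → DM4) : ∀ k : ℕ, Set (DMFun k)
  | 2 => {fun x => g (x 0) (x 1) (x 2)}
  | _ => ∅

/-- Union of two families of operations. -/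
def funion (S T : ∀ k : ℕ, Set (DMFun k)) : ∀ k : ℕ, Set (DMFun k) := fun k => S k ∪ T k

infixr:65 " ⊹ " => funion

/-- The generators of DLat: ∧, ∨, t, f (constants as unary constant functions). -/
def DLatGen : ∀ k : ℕ, Set (DMFun k) :=
  op2 meet ⊹ op2 join ⊹ op1 (fun _ => t) ⊹ op1 (fun _ => f)

/-- The generators of DMA: ∧, ∨, t, f, −. -/
def DMAGen : ∀ k : ℕ, Set (DMFun k) := DLatGen ⊹ op1 neg

/-- The generators of BiLat: ∧, ∨, t, f, ⊗, ⊕, n, b. -/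
def BiLatGen : ∀ k : ℕ, Set (DMFun k) :=
  DLatGen ⊹ op2 imeet ⊹ op2 ijoin ⊹ op1 (fun _ => n) ⊹ op1 (fun _ => b)

/-- A De Morgan function is harmonious if it commutes with conflation. -/
def Harmonious {k : ℕ} (g : DMFun k) : Prop :=
  ∀ x : Fin (k + 1) → DM4, g (fun i => conf (x i)) = conf (g x)

/-- A De Morgan function is positive if it is monotone in the componentwise truth order. -/
def Positive {k : ℕ} (g : DMFun k) : Prop :=
  ∀ x y : Fin (k + 1) → DM4, (∀ i, tle (x i) (y i)) → tle (g x) (g y)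

/-- A De Morgan function is persistent if it is monotone in the componentwise
information order. -/
def Persistent {k : ℕ} (g : DMFun k) : Prop :=
  ∀ x y : Fin (k + 1) → DM4, (∀ i, ile (x i) (y i)) → ile (g x) (g y)

/-- A De Morgan function preserves a subset X of DM4 if it maps tuples from X into X. -/
def Preserves {k : ℕ} (g : DMFun k) (X : Set DM4) : Prop :=
  ∀ x : Fin (k + 1) → DM4, (∀ i, x i ∈ X) → g x ∈ X

def B2 : Set DM4 := {t, f}
def K3 : Set DM4 := {t, n, f}
def P3 : Set DM4 := {t, b, f}

/-- A unary operation as a De Morgan function. -/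
def toF1 (g : DM4 → DM4) : DMFun 0 := fun x => g (x 0)

/-- A binary operation as a De Morgan function. -/
def toF2 (g : DM4 → DM4 → DM4) : DMFun 1 := fun x => g (x 0) (x 1)

/-- A ternary operation as a De Morgan function. -/
def toF3 (g : DM4 → DM4 → DM4 → DM4) : DMFun 2 := fun x => g (x 0) (x 1) (x 2)

/-- The clone generated by a family of operations, as a family of sets. -/
def CloneOf (S : ∀ k : ℕ, Set (DMFun k)) : ∀ k : ℕ, Set (DMFun k) :=
  fun k => {g | InClone S k g}

/-- Inclusion of families of operations. -/
def CloneLE (C D : ∀ k : ℕ, Set (DMFun k)) : Prop := ∀ k : ℕ, C k ⊆ D k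


/-! ### Auxiliary material for the proof -/

instance : Fintype DM4 := ⟨{t, f, n, b}, by intro x; cases x <;> decide⟩

section CloneBasics

variable {S : ∀ k : ℕ, Set (DMFun k)} {k : ℕ}

lemma comp1' {u : DM4 → DM4} (hu : InClone S 0 (toF1 u)) {g : DMFun k}
    (hg : InClone S k g) : InClone S k (fun x => u (g x)) :=
  InClone.comp (h := fun _ : Fin 1 => g) hu (fun _ => hg)

lemma comp2' {u : DM4 → DM4 → DM4} (hu : InClone S 1 (toF2 u)) {g h : DMFun k}
    (hg : InClone S k g) (hh : InClone S k h) :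
    InClone S k (fun x => u (g x) (h x)) :=
  InClone.comp (h := ![g, h]) hu (fun i => by fin_cases i <;> assumption)

lemma const_mem {c : DM4} (hc : InClone S 0 (toF1 (fun _ => c))) :
    InClone S k (fun _ => c) :=
  InClone.comp (h := fun _ : Fin 1 => (fun x => x 0 : DMFun k)) hc
    (fun _ => InClone.proj 0)

end CloneBasics

/-- χ_a : indicator of the value `a`. -/
def chi (a x : DM4) : DM4 := if x = a then t else f

section WithBasics

variable {S : ∀ k : ℕ, Set (DMFun k)} {k : ℕ}

def Basics (S : ∀ k : ℕ, Set (DMFun k)) : Prop := ∀ k, (DMAGen ⊹ op1 delta) k ⊆ S k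

lemma meet_mem (hS : Basics S) : InClone S 1 (toF2 meet) :=
  .base (hS 1 (Or.inl (Or.inl (Or.inl rfl))))

lemma join_mem (hS : Basics S) : InClone S 1 (toF2 join) :=
  .base (hS 1 (Or.inl (Or.inl (Or.inr (Or.inl rfl)))))

lemma constt_mem (hS : Basics S) : InClone S 0 (toF1 (fun _ => t)) :=
  .base (hS 0 (Or.inl (Or.inl (Or.inr (Or.inr (Or.inl rfl))))))

lemma constf_mem (hS : Basics S) : InClone S 0 (toF1 (fun _ => f)) :=
  .base (hS 0 (Or.inl (Or.inl (Or.inr (Or.inr (Or.inr rfl))))))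

lemma neg_mem (hS : Basics S) : InClone S 0 (toF1 neg) :=
  .base (hS 0 (Or.inl (Or.inr rfl)))

lemma delta_mem (hS : Basics S) : InClone S 0 (toF1 delta) :=
  .base (hS 0 (Or.inr rfl))

lemma cmeet (hS : Basics S) {g h : DMFun k} (hg : InClone S k g) (hh : InClone S k h) :
    InClone S k (fun x => meet (g x) (h x)) := comp2' (meet_mem hS) hg hh

lemma cjoin (hS : Basics S) {g h : DMFun k} (hg : InClone S k g) (hh : InClone S k h) :
    InClone S k (fun x => join (g x) (h x)) := comp2' (join_mem hS) hg hh

lemma cneg (hS : Basics S) {g : DMFun k} (hg : InClone S k g) :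
    InClone S k (fun x => neg (g x)) := comp1' (neg_mem hS) hg

lemma cdelta (hS : Basics S) {g : DMFun k} (hg : InClone S k g) :
    InClone S k (fun x => delta (g x)) := comp1' (delta_mem hS) hg

lemma cnabla (hS : Basics S) {g : DMFun k} (hg : InClone S k g) :
    InClone S k (fun x => nabla (g x)) := by
  have e : ∀ a, nabla a = neg (delta (neg a)) := by decide
  have : InClone S k (fun x => neg (delta (neg (g x)))) :=
    cneg hS (cdelta hS (cneg hS hg))
  simpa [← e] using this

lemma cconstt (hS : Basics S) : InClone S k (fun _ => t) := const_mem (constt_mem hS)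

lemma cconstf (hS : Basics S) : InClone S k (fun _ => f) := const_mem (constf_mem hS)

lemma cchi (hS : Basics S) (a : DM4) {g : DMFun k} (hg : InClone S k g) :
    InClone S k (fun x => chi a (g x)) := by
  cases a with
  | t =>
    have e : ∀ y, chi t y = meet (delta y) (nabla y) := by decide
    have := cmeet hS (cdelta hS hg) (cnabla hS hg)
    simpa [← e] using this
  | f =>
    have e : ∀ y, chi f y = meet (delta (neg y)) (nabla (neg y)) := by decide
    have := cmeet hS (cdelta hS (cneg hS hg)) (cnabla hS (cneg hS hg))
    simpa [← e] using this
  | n =>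
    have e : ∀ y, chi n y = meet (nabla y) (nabla (neg y)) := by decide
    have := cmeet hS (cnabla hS hg) (cnabla hS (cneg hS hg))
    simpa [← e] using this
  | b =>
    have e : ∀ y, chi b y = meet (delta y) (delta (neg y)) := by decide
    have := cmeet hS (cdelta hS hg) (cdelta hS (cneg hS hg))
    simpa [← e] using this

end WithBasics

/-! ### Folds of meet and join over lists -/

def joinl (l : List DM4) : DM4 := l.foldr join f
def meetl (l : List DM4) : DM4 := l.foldr meet t

lemma join_f_left : ∀ a, join f a = a := by decide
lemma join_self : ∀ a, join a a = a := by decide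
lemma join_f_right : ∀ a, join a f = a := by decide
lemma meet_t_left : ∀ a, meet t a = a := by decide
lemma meet_f_left : ∀ a, meet f a = f := by decide
lemma meet_f_right : ∀ a, meet a f = f := by decide

lemma joinl_cases (v : DM4) : ∀ {l : List DM4},
    (∀ u ∈ l, u = f ∨ u = v) → joinl l = f ∨ joinl l = v := by
  intro l
  induction l with
  | nil => intro _; left; rfl
  | cons u l ih =>
    intro h
    have hu := h u (List.mem_cons_self)
    have hl := ih (fun q hq => h q (List.mem_cons_of_mem _ hq))
    show join u (joinl l) = f ∨ join u (joinl l) = v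
    rcases hu with hu | hu <;> rcases hl with hl | hl <;>
      simp [hu, hl, join_f_left, join_f_right, join_self]

lemma joinl_all_f : ∀ {l : List DM4}, (∀ u ∈ l, u = f) → joinl l = f := by
  intro l
  induction l with
  | nil => intro _; rfl
  | cons u l ih =>
    intro h
    show join u (joinl l) = f
    rw [h u (List.mem_cons_self),
      ih (fun q hq => h q (List.mem_cons_of_mem _ hq)), join_f_left]

lemma joinl_eq (v : DM4) : ∀ l : List DM4,
    (∀ u ∈ l, u = f ∨ u = v) → v ∈ l → joinl l = v := by
  by_cases hvf : v = f
  · subst hvf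
    intro l h _
    exact joinl_all_f (fun u hu => (h u hu).elim id id)
  · intro l
    induction l with
    | nil => simp
    | cons u l ih =>
      intro h hv
      have hl' : ∀ q ∈ l, q = f ∨ q = v := fun q hq => h q (List.mem_cons_of_mem _ hq)
      show join u (joinl l) = v
      rcases h u (List.mem_cons_self) with hu | hu
      · have hvl : v ∈ l := by
          rcases List.mem_cons.mp hv with hv' | hv'
          · exact absurd (hv'.trans hu) hvf
          · exact hv'
        rw [hu, ih hl' hvl, join_f_left]
      · rw [hu]
        rcases joinl_cases (l := l) v hl' with h' | h' <;> rw [h']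
        · exact join_f_right v
        · exact join_self v

lemma meetl_all_t : ∀ {l : List DM4}, (∀ u ∈ l, u = t) → meetl l = t := by
  intro l
  induction l with
  | nil => intro _; rfl
  | cons u l ih =>
    intro h
    show meet u (meetl l) = t
    rw [h u (List.mem_cons_self),
      ih (fun q hq => h q (List.mem_cons_of_mem _ hq)), meet_t_left]

lemma meetl_f : ∀ {l : List DM4}, f ∈ l → meetl l = f := by
  intro l
  induction l with
  | nil => simp
  | cons u l ih =>
    intro h
    show meet u (meetl l) = f
    rcases List.mem_cons.mp h with h' | h'
    · rw [← h', meet_f_left]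
    · rw [ih h', meet_f_right]

/-! ### Clone closure of list folds -/

section Folds

variable {S : ∀ k : ℕ, Set (DMFun k)} {k : ℕ}

lemma cjoinl (hS : Basics S) : ∀ {L : List (DMFun k)}, (∀ p ∈ L, InClone S k p) →
    InClone S k (fun x => joinl (L.map (fun p => p x))) := by
  intro L
  induction L with
  | nil => intro _; exact cconstf hS
  | cons p L ih =>
    intro hL
    have := cjoin hS (hL p (by simp)) (ih (fun q hq => hL q (by simp [hq])))
    exact this

lemma cmeetl (hS : Basics S) : ∀ {L : List (DMFun k)}, (∀ p ∈ L, InClone S k p) →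
    InClone S k (fun x => meetl (L.map (fun p => p x))) := by
  intro L
  induction L with
  | nil => intro _; exact cconstt hS
  | cons p L ih =>
    intro hL
    have := cmeet hS (hL p (by simp)) (ih (fun q hq => hL q (by simp [hq])))
    exact this

end Folds

/-! ### The main interpolation lemma -/

section Main

variable {S : ∀ k : ℕ, Set (DMFun k)} {k : ℕ}

/-- The term associated to a tuple `a` and payload `p`. -/
def dterm (a : Fin (k + 1) → DM4) (p : DMFun k) : DMFun k :=
  fun x => meet (meetl ((List.finRange (k + 1)).map (fun i => chi (a i) (x i)))) (p x)

lemma dterm_self {a : Fin (k + 1) → DM4} {p : DMFun k} : dterm a p a = p a := by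
  unfold dterm
  rw [meetl_all_t, meet_t_left]
  intro u hu
  rcases List.mem_map.mp hu with ⟨i, _, rfl⟩
  simp [chi]

lemma dterm_ne {a x : Fin (k + 1) → DM4} {p : DMFun k} (h : x ≠ a) :
    dterm a p x = f := by
  unfold dterm
  have : ∃ i, x i ≠ a i := by
    by_contra hc
    push_neg at hc
    exact h (funext hc)
  obtain ⟨i, hi⟩ := this
  rw [meetl_f, meet_f_left]
  exact List.mem_map.mpr ⟨i, List.mem_finRange i, by simp [chi, hi]⟩

lemma dterm_mem (hS : Basics S)
    {a : Fin (k + 1) → DM4} {p : DMFun k} (hp : InClone S k p) :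
    InClone S k (dterm a p) := by
  apply cmeet hS _ hp
  have hmem : ∀ q ∈ (List.finRange (k + 1)).map
      (fun i => (fun x : Fin (k+1) → DM4 => chi (a i) (x i))), InClone S k q := by
    intro q hq
    rcases List.mem_map.mp hq with ⟨i, _, rfl⟩
    exact cchi hS (a i) (InClone.proj i)
  have := cmeetl hS hmem
  simpa [List.map_map, Function.comp_def] using this

lemma main_interpolation (hS : Basics S) {g : DMFun k}
    (hpay : ∀ a : Fin (k + 1) → DM4, ∃ p : DMFun k, InClone S k p ∧ p a = g a) :
    InClone S k g := by
  choose p hp hpa using hpay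
  set A : List (Fin (k + 1) → DM4) := (Finset.univ : Finset (Fin (k + 1) → DM4)).toList with hA
  set TL : List (DMFun k) := A.map (fun a => dterm a (p a)) with hTL
  have hG : InClone S k (fun x => joinl (TL.map (fun q => q x))) := by
    apply cjoinl hS
    intro q hq
    rcases List.mem_map.mp hq with ⟨a, _, rfl⟩
    exact dterm_mem hS (hp a)
  have hval : ∀ x, joinl (TL.map (fun q => q x)) = g x := by
    intro x
    apply joinl_eq (g x) _
    · intro u hu
      rcases List.mem_map.mp hu with ⟨q, hq, rfl⟩
      rcases List.mem_map.mp hq with ⟨a, _, rfl⟩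
      by_cases hax : x = a
      · subst hax; right; rw [dterm_self]; exact hpa x
      · left; exact dterm_ne hax
    · have hx : dterm x (p x) x ∈ TL.map (fun q => q x) := by
        apply List.mem_map.mpr
        exact ⟨dterm x (p x), List.mem_map.mpr ⟨x, by simp [hA], rfl⟩, rfl⟩
      rw [dterm_self, hpa x] at hx
      exact hx
  have : g = fun x => joinl (TL.map (fun q => q x)) := funext (fun x => (hval x).symm)
  rw [this]
  exact hG

end Main
/-! ### Preservation: the easy direction -/

lemma preserves_of_inClone {S : ∀ k : ℕ, Set (DMFun k)} {X : Set DM4}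
    (hgen : ∀ k, ∀ h ∈ S k, Preserves h X) {k : ℕ} {g : DMFun k}
    (hg : InClone S k g) : Preserves g X := by
  induction hg with
  | base hb => exact hgen _ _ hb
  | proj i => exact fun x hx => hx i
  | comp hg hh ihg ihh => exact fun x hx => ihg _ (fun i => ihh i x hx)

lemma pres_op1 {u : DM4 → DM4} {X : Set DM4} (hu : ∀ a ∈ X, u a ∈ X) :
    ∀ k, ∀ h ∈ op1 u k, Preserves h X := by
  intro k h hh
  cases k with
  | zero =>
    have he : h = fun x => u (x 0) := hh
    subst he
    exact fun x hx => hu _ (hx 0)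
  | succ k => exact absurd hh (by simp [op1])

lemma pres_op2 {u : DM4 → DM4 → DM4} {X : Set DM4}
    (hu : ∀ a ∈ X, ∀ b ∈ X, u a b ∈ X) :
    ∀ k, ∀ h ∈ op2 u k, Preserves h X := by
  intro k h hh
  cases k with
  | zero => exact absurd hh (by simp [op2])
  | succ k =>
    cases k with
    | zero =>
      have he : h = fun x => u (x 0) (x 1) := hh
      subst he
      exact fun x hx => hu _ (hx 0) _ (hx 1)
    | succ k => exact absurd hh (by simp [op2])

lemma mem_B2 (a : DM4) : a ∈ B2 ↔ (a = t ∨ a = f) := by simp [B2]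
lemma mem_K3 (a : DM4) : a ∈ K3 ↔ (a = t ∨ a = n ∨ a = f) := by simp [K3]
lemma mem_P3 (a : DM4) : a ∈ P3 ↔ (a = t ∨ a = b ∨ a = f) := by simp [P3]

lemma pres_basics {X : Set DM4}
    (hmeet : ∀ a ∈ X, ∀ b ∈ X, meet a b ∈ X)
    (hjoin : ∀ a ∈ X, ∀ b ∈ X, join a b ∈ X)
    (ht : t ∈ X) (hf : f ∈ X)
    (hneg : ∀ a ∈ X, neg a ∈ X) (hdelta : ∀ a ∈ X, delta a ∈ X) :
    ∀ k, ∀ h ∈ (DMAGen ⊹ op1 delta) k, Preserves h X := by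
  intro k h hh
  rcases hh with ((hh | (hh | (hh | hh))) | hh) | hh
  · exact pres_op2 hmeet k h hh
  · exact pres_op2 hjoin k h hh
  · exact pres_op1 (fun a _ => ht) k h hh
  · exact pres_op1 (fun a _ => hf) k h hh
  · exact pres_op1 hneg k h hh
  · exact pres_op1 hdelta k h hh

lemma pres_basics_B2 : ∀ k, ∀ h ∈ (DMAGen ⊹ op1 delta) k, Preserves h B2 := by
  apply pres_basics <;> simp only [mem_B2] <;> decide

lemma pres_basics_K3 : ∀ k, ∀ h ∈ (DMAGen ⊹ op1 delta) k, Preserves h K3 := by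
  apply pres_basics <;> simp only [mem_K3] <;> decide

lemma pres_basics_P3 : ∀ k, ∀ h ∈ (DMAGen ⊹ op1 delta) k, Preserves h P3 := by
  apply pres_basics <;> simp only [mem_P3] <;> decide

/-- Easy direction for the extended clones. -/
lemma pres_ext {X : Set DM4} {u : DM4 → DM4}
    (hbase : ∀ k, ∀ h ∈ (DMAGen ⊹ op1 delta) k, Preserves h X)
    (hu : ∀ a ∈ X, u a ∈ X) :
    ∀ k, ∀ h ∈ (DMAGen ⊹ op1 delta ⊹ op1 u) k, Preserves h X := by
  intro k h hh
  rcases hh with hh | hh | hh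
  · exact hbase k h (Or.inl hh)
  · exact hbase k h (Or.inr hh)
  · exact pres_op1 hu k h hh

/-! ### Containment and membership facts for extended clones -/

lemma basics_self : Basics (DMAGen ⊹ op1 delta) := fun _ => le_refl _

lemma basics_ext (T : ∀ k : ℕ, Set (DMFun k)) : Basics (DMAGen ⊹ op1 delta ⊹ T) := by
  intro k h hh
  rcases hh with hh | hh
  · exact Or.inl hh
  · exact Or.inr (Or.inl hh)

lemma extra_mem (u : DM4 → DM4) :
    InClone (DMAGen ⊹ op1 delta ⊹ op1 u) 0 (toF1 u) :=
  .base (Or.inr (Or.inr rfl))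

/-! ### Extraction lemmas from preservation -/

lemma eq_n_of_not_mem_P3 {a : DM4} (h : a ∉ P3) : a = n := by
  have hd : ∀ a : DM4, ¬(a = t ∨ a = b ∨ a = f) → a = n := by decide
  exact hd a (fun hc => h ((mem_P3 a).mpr hc))

lemma eq_b_of_not_mem_K3 {a : DM4} (h : a ∉ K3) : a = b := by
  have hd : ∀ a : DM4, ¬(a = t ∨ a = n ∨ a = f) → a = b := by decide
  exact hd a (fun hc => h ((mem_K3 a).mpr hc))

lemma mem_nb_of_not_mem_B2 {a : DM4} (h : a ∉ B2) : a = n ∨ a = b := by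
  have hd : ∀ a : DM4, ¬(a = t ∨ a = f) → (a = n ∨ a = b) := by decide
  exact hd a (fun hc => h ((mem_B2 a).mpr hc))

lemma n_not_mem_P3 : (n : DM4) ∉ P3 := fun hc => by
  rcases (mem_P3 n).mp hc with h | h | h <;> exact DM4.noConfusion h

lemma b_not_mem_K3 : (b : DM4) ∉ K3 := fun hc => by
  rcases (mem_K3 b).mp hc with h | h | h <;> exact DM4.noConfusion h

lemma n_not_mem_B2 : (n : DM4) ∉ B2 := fun hc => by
  rcases (mem_B2 n).mp hc with h | h <;> exact DM4.noConfusion h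

lemma b_not_mem_B2 : (b : DM4) ∉ B2 := fun hc => by
  rcases (mem_B2 b).mp hc with h | h <;> exact DM4.noConfusion h

lemma exists_bad {k : ℕ} {a : Fin (k + 1) → DM4} {X : Set DM4} {g : DMFun k}
    (hg : Preserves g X) (h : g a ∉ X) : ∃ j, a j ∉ X := by
  by_contra hc
  push_neg at hc
  exact h (hg a hc)

/-! ### Payload construction -/

lemma payload_mk {S : ∀ k : ℕ, Set (DMFun k)} (hB : Basics S) {k : ℕ} {g : DMFun k}
    (hn : ∀ a : Fin (k + 1) → DM4, g a = n → ∃ p : DMFun k, InClone S k p ∧ p a = n)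
    (hb : ∀ a : Fin (k + 1) → DM4, g a = b → ∃ p : DMFun k, InClone S k p ∧ p a = b) :
    ∀ a : Fin (k + 1) → DM4, ∃ p : DMFun k, InClone S k p ∧ p a = g a := by
  intro a
  cases hga : g a with
  | t => exact ⟨fun _ => t, cconstt hB, rfl⟩
  | f => exact ⟨fun _ => f, cconstf hB, rfl⟩
  | n =>
    obtain ⟨p, hp, hpa⟩ := hn a hga
    exact ⟨p, hp, hpa⟩
  | b =>
    obtain ⟨p, hp, hpa⟩ := hb a hga
    exact ⟨p, hp, hpa⟩
/-- Characterization of the clones preserving subalgebras. -/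
theorem clones_preserving_subalgebras (k : ℕ) (g : DMFun k) :
    (InClone (DMAGen ⊹ op1 delta) k g ↔
      Preserves g B2 ∧ Preserves g K3 ∧ Preserves g P3) ∧
    (InClone (DMAGen ⊹ op1 delta ⊹ op1 (fun _ => n)) k g ↔ Preserves g K3) ∧
    (InClone (DMAGen ⊹ op1 delta ⊹ op1 (fun _ => b)) k g ↔ Preserves g P3) ∧
    (InClone (DMAGen ⊹ op1 delta ⊹ op1 conf) k g ↔ Preserves g B2) ∧
    (InClone (DMAGen ⊹ op1 delta ⊹ op1 idbn) k g ↔ Preserves g B2 ∧ Preserves g K3) ∧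
    (InClone (DMAGen ⊹ op1 delta ⊹ op1 idnb) k g ↔ Preserves g B2 ∧ Preserves g P3) := by
  -- payload builders used repeatedly
  have hn_of_P3 : ∀ {S : ∀ k' : ℕ, Set (DMFun k')}, Preserves g P3 →
      ∀ a : Fin (k + 1) → DM4, g a = n → ∃ p : DMFun k, InClone S k p ∧ p a = n := by
    intro S hP3 a hga
    obtain ⟨j, hj⟩ := exists_bad hP3 (hga ▸ n_not_mem_P3)
    exact ⟨fun x => x j, .proj j, eq_n_of_not_mem_P3 hj⟩
  have hb_of_K3 : ∀ {S : ∀ k' : ℕ, Set (DMFun k')}, Preserves g K3 →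
      ∀ a : Fin (k + 1) → DM4, g a = b → ∃ p : DMFun k, InClone S k p ∧ p a = b := by
    intro S hK3 a hga
    obtain ⟨j, hj⟩ := exists_bad hK3 (hga ▸ b_not_mem_K3)
    exact ⟨fun x => x j, .proj j, eq_b_of_not_mem_K3 hj⟩
  refine ⟨⟨?_, ?_⟩, ⟨?_, ?_⟩, ⟨?_, ?_⟩, ⟨?_, ?_⟩, ⟨?_, ?_⟩, ⟨?_, ?_⟩⟩
  -- (i) →
  · intro hg
    exact ⟨preserves_of_inClone pres_basics_B2 hg,
      preserves_of_inClone pres_basics_K3 hg,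
      preserves_of_inClone pres_basics_P3 hg⟩
  -- (i) ←
  · rintro ⟨_, hK3, hP3⟩
    exact main_interpolation basics_self
      (payload_mk basics_self (hn_of_P3 hP3) (hb_of_K3 hK3))
  -- (ii) →
  · intro hg
    exact preserves_of_inClone (pres_ext pres_basics_K3
      (fun a _ => (mem_K3 n).mpr (Or.inr (Or.inl rfl)))) hg
  -- (ii) ←
  · intro hK3
    refine main_interpolation (basics_ext _) (payload_mk (basics_ext _) ?_ (hb_of_K3 hK3))
    intro a _
    exact ⟨fun _ => n, const_mem (extra_mem _), rfl⟩
  -- (iii) →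
  · intro hg
    exact preserves_of_inClone (pres_ext pres_basics_P3
      (fun a _ => (mem_P3 b).mpr (Or.inr (Or.inl rfl)))) hg
  -- (iii) ←
  · intro hP3
    refine main_interpolation (basics_ext _) (payload_mk (basics_ext _) (hn_of_P3 hP3) ?_)
    intro a _
    exact ⟨fun _ => b, const_mem (extra_mem _), rfl⟩
  -- (iv) →
  · intro hg
    refine preserves_of_inClone (pres_ext pres_basics_B2 ?_) hg
    simp only [mem_B2]; decide
  -- (iv) ←
  · intro hB2
    refine main_interpolation (basics_ext _) (payload_mk (basics_ext _) ?_ ?_)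
    · intro a hga
      obtain ⟨j, hj⟩ := exists_bad hB2 (hga ▸ n_not_mem_B2)
      rcases mem_nb_of_not_mem_B2 hj with hj' | hj'
      · exact ⟨fun x => x j, .proj j, hj'⟩
      · exact ⟨fun x => conf (x j), comp1' (extra_mem conf) (.proj j), by beta_reduce; rw [hj']; rfl⟩
    · intro a hga
      obtain ⟨j, hj⟩ := exists_bad hB2 (hga ▸ b_not_mem_B2)
      rcases mem_nb_of_not_mem_B2 hj with hj' | hj'
      · exact ⟨fun x => conf (x j), comp1' (extra_mem conf) (.proj j), by beta_reduce; rw [hj']; rfl⟩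
      · exact ⟨fun x => x j, .proj j, hj'⟩
  -- (v) →
  · intro hg
    constructor
    · refine preserves_of_inClone (pres_ext pres_basics_B2 ?_) hg
      simp only [mem_B2]; decide
    · refine preserves_of_inClone (pres_ext pres_basics_K3 ?_) hg
      simp only [mem_K3]; decide
  -- (v) ←
  · rintro ⟨hB2, hK3⟩
    refine main_interpolation (basics_ext _) (payload_mk (basics_ext _) ?_ (hb_of_K3 hK3))
    intro a hga
    obtain ⟨j, hj⟩ := exists_bad hB2 (hga ▸ n_not_mem_B2)
    rcases mem_nb_of_not_mem_B2 hj with hj' | hj'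
    · exact ⟨fun x => x j, .proj j, hj'⟩
    · exact ⟨fun x => idbn (x j), comp1' (extra_mem idbn) (.proj j), by beta_reduce; rw [hj']; rfl⟩
  -- (vi) →
  · intro hg
    constructor
    · refine preserves_of_inClone (pres_ext pres_basics_B2 ?_) hg
      simp only [mem_B2]; decide
    · refine preserves_of_inClone (pres_ext pres_basics_P3 ?_) hg
      simp only [mem_P3]; decide
  -- (vi) ←
  · rintro ⟨hB2, hP3⟩
    refine main_interpolation (basics_ext _) (payload_mk (basics_ext _) (hn_of_P3 hP3) ?_)
    intro a hga
    obtain ⟨j, hj⟩ := exists_bad hB2 (hga ▸ b_not_mem_B2)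
    rcases mem_nb_of_not_mem_B2 hj with hj' | hj'
    · exact ⟨fun x => idnb (x j), comp1' (extra_mem idnb) (.proj j), by beta_reduce; rw [hj']; rfl⟩
    · exact ⟨fun x => x j, .proj j, hj'⟩

end DM4
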